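/- Let q = p^n be a prime power and let 0 ≤ m ≤ n, with (m, n, p) ≠ (0, 1, 2). Then there exists a circulant q-Butson Hadamard matrix of dimension d = p^{m+n} = p^m·q. -/

import Mathlib

/-- `H` is a `q`-Butson Hadamard matrix: every entry is a `q`-th root of unity
and `H * Hᴴ = d • I`. -/
def IsButsonHadamard (q d : ℕ) (H : Matrix (Fin d) (Fin d) ℂ) : Prop :=
  (∀ i j, H i j ^ q = 1) ∧
    H * H.conjTranspose = (d : ℂ) • (1 : Matrix (Fin d) (Fin d) ℂ)

/-- `H` is circulant: `H i j = a (i - j)` for some `a : ZMod d → ℂ`,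
indices read modulo `d`. -/
def IsCirculant {d : ℕ} (H : Matrix (Fin d) (Fin d) ℂ) : Prop :=
  ∃ a : ZMod d → ℂ, ∀ i j, H i j = a (((i : ℕ) : ZMod d) - ((j : ℕ) : ZMod d))

private lemma zpow_eq_of_dvd_sub {q : ℕ} {ζ : ℂ} (hζ : IsPrimitiveRoot ζ q) (hq : q ≠ 0)
    {D E : ℤ} (h : (q : ℤ) ∣ D - E) : ζ ^ D = ζ ^ E := by
  have hne : ζ ≠ 0 := hζ.ne_zero hq
  obtain ⟨t, ht⟩ := h
  have hD : D = E + (q : ℤ) * t := by linarith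
  rw [hD, zpow_add₀ hne, zpow_mul, zpow_natCast, hζ.pow_eq_one, one_zpow, mul_one]

private lemma geom_sum_zero' {w : ℂ} {J : ℕ} (hw : w ≠ 1) (hJ : w ^ J = 1) :
    ∑ j : Fin J, w ^ (j : ℕ) = 0 := by
  rw [Fin.sum_univ_eq_sum_range, geom_sum_eq hw, hJ, sub_self, zero_div]

private lemma key_construction (q P J α c : ℕ) (hq : q ≠ 0) (hP : 0 < P) (hJ : 0 < J)
    (H1 : q ∣ α * J) (H2 : q ∣ 2 * c * J) (H3 : q ∣ c * J ^ 2)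
    (H4 : (q : ℤ) ∣ 2 * c - α * P)
    (Hres : ∀ S : ℕ, 0 < S → S < P * J → q ∣ α * S →
      P ∣ S ∧ q ∣ 2 * c * (S / P) ∧ ¬ q ∣ α * (S / P) ∧ q ∣ α * (S / P) * P) :
    ∃ H : Matrix (Fin (P * J)) (Fin (P * J)) ℂ,
      IsCirculant H ∧ IsButsonHadamard q (P * J) H := by
  have hd : 0 < P * J := Nat.mul_pos hP hJ
  haveI : NeZero (P * J) := ⟨hd.ne'⟩
  have hlt : ∀ u v : ℕ, u < P → v < J → u + P * v < P * J := by
    intro u v hu hv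
    calc u + P * v < P + P * v := Nat.add_lt_add_right hu _
      _ = P * (v + 1) := by ring
      _ ≤ P * J := Nat.mul_le_mul_left _ hv
  set ζ : ℂ := Complex.exp (2 * Real.pi * Complex.I / q) with hζdef
  have hζ : IsPrimitiveRoot ζ q := Complex.isPrimitiveRoot_exp q hq
  have hζne : ζ ≠ 0 := hζ.ne_zero hq
  have hζsq : Complex.normSq ζ = 1 := by
    have h1 : ‖ζ‖ = 1 := hζ.norm'_eq_one hq
    rw [← Complex.sq_norm, h1]; norm_num
  have hζconj : star ζ = ζ⁻¹ := by
    rw [Complex.star_def, Complex.inv_def, hζsq]; simp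
  set g : ℕ → ℕ := fun x => α * (x % P) * (x / P) + c * (x / P) ^ 2 with hgdef
  have hgval : ∀ u v : ℕ, u < P → g (u + P * v) = α * u * v + c * v ^ 2 := by
    intro u v hu
    rw [hgdef]
    simp only
    rw [Nat.add_mul_mod_self_left, Nat.mod_eq_of_lt hu, Nat.add_mul_div_left _ _ hP,
      Nat.div_eq_of_lt hu, zero_add]
  set a : ZMod (P * J) → ℂ := fun z => ζ ^ g z.val with hadef
  have haconj : ∀ z, star (a z) = (ζ ^ g z.val)⁻¹ := by
    intro z; rw [hadef]; simp only [star_pow, hζconj, inv_pow]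
  -- the correlation sum
  have main : ∀ s : ZMod (P * J),
      ∑ x : ZMod (P * J), a (s + x) * star (a x)
        = if s = 0 then ((P * J : ℕ) : ℂ) else 0 := by
    intro s
    by_cases hs : s = 0
    · subst hs
      simp only [zero_add, if_pos]
      have hterm : ∀ x : ZMod (P * J), a x * star (a x) = 1 := by
        intro x
        rw [Complex.star_def, Complex.mul_conj]
        norm_cast
        rw [hadef]
        simp only []
        rw [map_pow, hζsq, one_pow]
      rw [Finset.sum_congr rfl fun x _ => hterm x, Finset.sum_const, Finset.card_univ,
        ZMod.card, nsmul_eq_mul, mul_one]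
    · rw [if_neg hs]
      set Sv := s.val with hSvdef
      have hSv0 : 0 < Sv := Nat.pos_of_ne_zero (fun h => hs ((ZMod.val_eq_zero s).mp h))
      have hSvlt : Sv < P * J := ZMod.val_lt s
      set σ := Sv % P with hσdef
      set τ := Sv / P with hτdef
      have hστ : σ + P * τ = Sv := Nat.mod_add_div Sv P
      have hσP : σ < P := Nat.mod_lt _ hP
      -- reindex the sum by (i, j) ↦ i + P * j
      have hφ : Function.Bijective
          (fun ij : Fin P × Fin J => (((ij.1 : ℕ) + P * (ij.2 : ℕ) : ℕ) : ZMod (P * J))) := by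
        rw [Fintype.bijective_iff_injective_and_card]
        constructor
        · rintro ⟨i₁, j₁⟩ ⟨i₂, j₂⟩ h
          simp only at h
          have h' : (i₁ : ℕ) + P * (j₁ : ℕ) = (i₂ : ℕ) + P * (j₂ : ℕ) := by
            have := congrArg ZMod.val h
            rwa [ZMod.val_cast_of_lt (hlt _ _ i₁.isLt j₁.isLt),
              ZMod.val_cast_of_lt (hlt _ _ i₂.isLt j₂.isLt)] at this
          have hi : (i₁ : ℕ) = (i₂ : ℕ) := by
            have := congrArg (· % P) h'
            simpa [Nat.add_mul_mod_self_left, Nat.mod_eq_of_lt i₁.isLt,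
              Nat.mod_eq_of_lt i₂.isLt] using this
          have hj : (j₁ : ℕ) = (j₂ : ℕ) := by
            have := congrArg (· / P) h'
            simpa [Nat.add_mul_div_left _ _ hP, Nat.div_eq_of_lt i₁.isLt,
              Nat.div_eq_of_lt i₂.isLt] using this
          exact Prod.ext (Fin.ext hi) (Fin.ext hj)
        · simp [ZMod.card]
      rw [← Fintype.sum_bijective _ hφ
        (fun ij : Fin P × Fin J =>
          a (s + (((ij.1 : ℕ) + P * (ij.2 : ℕ) : ℕ) : ZMod (P * J))) *
            star (a (((ij.1 : ℕ) + P * (ij.2 : ℕ) : ℕ) : ZMod (P * J))))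
        _ (fun ij => rfl)]
      rw [Fintype.sum_prod_type]
      -- rewrite each term
      have hterm : ∀ (i : Fin P) (j : Fin J),
          a (s + (((i : ℕ) + P * (j : ℕ) : ℕ) : ZMod (P * J))) *
            star (a (((i : ℕ) + P * (j : ℕ) : ℕ) : ZMod (P * J)))
          = (ζ ^ (α * Sv)) ^ (j : ℕ) *
            ζ ^ ((α : ℤ) * (i : ℕ) * ((τ : ℤ) + ((((i : ℕ) + σ) / P : ℕ) : ℤ))
              + (α : ℤ) * ((σ : ℤ) - (P : ℤ) * ((((i : ℕ) + σ) / P : ℕ) : ℤ))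
                  * ((τ : ℤ) + ((((i : ℕ) + σ) / P : ℕ) : ℤ))
              + (c : ℤ) * ((τ : ℤ) + ((((i : ℕ) + σ) / P : ℕ) : ℤ)) ^ 2) := by
        intro i j
        set ε := ((i : ℕ) + σ) / P with hεdef
        set i' := ((i : ℕ) + σ) % P with hi'def
        set K := ((j : ℕ) + (τ + ε)) / J with hKdef
        set j'' := ((j : ℕ) + (τ + ε)) % J with hj''def
        have e1 : i' + P * ε = (i : ℕ) + σ := Nat.mod_add_div _ _
        have e2 : j'' + J * K = (j : ℕ) + (τ + ε) := Nat.mod_add_div _ _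
        have hi'P : i' < P := Nat.mod_lt _ hP
        have hj''J : j'' < J := Nat.mod_lt _ hJ
        have hxlt : (i : ℕ) + P * (j : ℕ) < P * J := hlt _ _ i.isLt j.isLt
        have hxval : ((((i : ℕ) + P * (j : ℕ) : ℕ)) : ZMod (P * J)).val
            = (i : ℕ) + P * (j : ℕ) := ZMod.val_cast_of_lt hxlt
        have hsum : Sv + ((i : ℕ) + P * (j : ℕ)) = (i' + P * j'') + (P * J) * K := by
          calc Sv + ((i : ℕ) + P * (j : ℕ)) = (σ + P * τ) + ((i : ℕ) + P * (j : ℕ)) := by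
                rw [hστ]
            _ = ((i : ℕ) + σ) + P * (τ + (j : ℕ)) := by ring
            _ = (i' + P * ε) + P * (τ + (j : ℕ)) := by rw [e1]
            _ = i' + P * ((j : ℕ) + (τ + ε)) := by ring
            _ = i' + P * (j'' + J * K) := by rw [e2]
            _ = (i' + P * j'') + (P * J) * K := by ring
        have haddval : (s + (((i : ℕ) + P * (j : ℕ) : ℕ) : ZMod (P * J))).val
            = i' + P * j'' := by
          rw [ZMod.val_add, hxval, ← hSvdef, hsum, Nat.add_mul_mod_self_left]
          exact Nat.mod_eq_of_lt (hlt _ _ hi'P hj''J)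
        have LHSeq : a (s + (((i : ℕ) + P * (j : ℕ) : ℕ) : ZMod (P * J))) *
              star (a (((i : ℕ) + P * (j : ℕ) : ℕ) : ZMod (P * J)))
            = ζ ^ (((α * i' * j'' + c * j'' ^ 2 : ℕ) : ℤ)
                - ((α * (i : ℕ) * (j : ℕ) + c * (j : ℕ) ^ 2 : ℕ) : ℤ)) := by
          rw [haconj, hadef]
          simp only
          rw [haddval, hxval, hgval _ _ hi'P, hgval _ _ i.isLt,
            zpow_sub₀ hζne, zpow_natCast, zpow_natCast, div_eq_mul_inv]
        rw [LHSeq]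
        have RHSeq : (ζ ^ (α * Sv)) ^ (j : ℕ) *
              ζ ^ ((α : ℤ) * (i : ℕ) * ((τ : ℤ) + (ε : ℤ))
                + (α : ℤ) * ((σ : ℤ) - (P : ℤ) * (ε : ℤ)) * ((τ : ℤ) + (ε : ℤ))
                + (c : ℤ) * ((τ : ℤ) + (ε : ℤ)) ^ 2)
            = ζ ^ (((α * Sv : ℕ) : ℤ) * ((j : ℕ) : ℤ)
                + ((α : ℤ) * (i : ℕ) * ((τ : ℤ) + (ε : ℤ))
                + (α : ℤ) * ((σ : ℤ) - (P : ℤ) * (ε : ℤ)) * ((τ : ℤ) + (ε : ℤ))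
                + (c : ℤ) * ((τ : ℤ) + (ε : ℤ)) ^ 2)) := by
          conv_rhs => rw [zpow_add₀ hζne, zpow_mul ζ ((α * Sv : ℕ) : ℤ) ((j : ℕ) : ℤ),
            zpow_natCast ζ (α * Sv), zpow_natCast (ζ ^ (α * Sv)) (j : ℕ)]
        rw [RHSeq]
        apply zpow_eq_of_dvd_sub hζ hq
        have hi'Z : (i' : ℤ) = (i : ℕ) + (σ : ℤ) - P * ε := by
          have h1 : (i' : ℤ) + (P : ℤ) * (ε : ℤ) = ((i : ℕ) : ℤ) + (σ : ℤ) := by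
            exact_mod_cast e1
          linarith
        have hj''Z : (j'' : ℤ) = (j : ℕ) + ((τ : ℤ) + ε) - J * K := by
          have h1 : (j'' : ℤ) + (J : ℤ) * (K : ℤ) = ((j : ℕ) : ℤ) + ((τ : ℤ) + (ε : ℤ)) := by
            exact_mod_cast e2
          linarith
        have hSvZ : (σ : ℤ) + P * τ = (Sv : ℤ) := by exact_mod_cast hστ
        obtain ⟨u, hu⟩ := H4
        obtain ⟨v, hv⟩ := H1
        obtain ⟨w, hw⟩ := H2
        obtain ⟨y, hy⟩ := H3
        have hvZ : (α : ℤ) * J = q * v := by exact_mod_cast hv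
        have hwZ : 2 * (c : ℤ) * J = q * w := by exact_mod_cast hw
        have hyZ : (c : ℤ) * (J : ℤ) ^ 2 = q * y := by exact_mod_cast hy
        refine ⟨u * ((τ : ℤ) + ε) * (j : ℕ) - v * (K * ((i : ℕ) + (σ : ℤ) - P * ε))
          - w * (K * ((j : ℕ) + (τ : ℤ) + ε)) + y * (K : ℤ) ^ 2, ?_⟩
        push_cast
        rw [hi'Z, hj''Z, ← hSvZ]
        linear_combination (((τ : ℤ) + ε) * (j : ℕ)) * hu
          - (K * ((i : ℕ) + (σ : ℤ) - P * ε)) * hvZ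
          - (K * ((j : ℕ) + (τ : ℤ) + ε)) * hwZ + (K : ℤ) ^ 2 * hyZ
      rw [Finset.sum_congr rfl fun i _ => Finset.sum_congr rfl fun j _ => hterm i j]
      -- now evaluate
      by_cases hdvd : q ∣ α * Sv
      · obtain ⟨hPS, h2c, hnd, hpd⟩ := Hres Sv hSv0 hSvlt hdvd
        have hσ0 : σ = 0 := by
          obtain ⟨t, ht⟩ := hPS
          rw [hσdef, ht, Nat.mul_mod_right]
        have hε0 : ∀ i : Fin P, ((i : ℕ) + σ) / P = 0 := by
          intro i; rw [hσ0, add_zero]; exact Nat.div_eq_of_lt i.isLt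
        have hw1 : ζ ^ (α * Sv) = 1 := (hζ.pow_eq_one_iff_dvd _).mpr hdvd
        have hsimp : ∀ i : Fin P, ∀ j : Fin J,
            (ζ ^ (α * Sv)) ^ (j : ℕ) *
              ζ ^ ((α : ℤ) * (i : ℕ) * ((τ : ℤ) + ((((i : ℕ) + σ) / P : ℕ) : ℤ))
                + (α : ℤ) * ((σ : ℤ) - (P : ℤ) * ((((i : ℕ) + σ) / P : ℕ) : ℤ))
                    * ((τ : ℤ) + ((((i : ℕ) + σ) / P : ℕ) : ℤ))
                + (c : ℤ) * ((τ : ℤ) + ((((i : ℕ) + σ) / P : ℕ) : ℤ)) ^ 2)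
            = (ζ ^ (α * τ)) ^ (i : ℕ) * ζ ^ (c * τ ^ 2) := by
          intro i j
          rw [hw1, one_pow, one_mul, hε0 i, hσ0]
          push_cast
          have : (α : ℤ) * (i : ℕ) * ((τ : ℤ) + 0) + (α : ℤ) * (0 - (P : ℤ) * 0) * ((τ : ℤ) + 0)
              + (c : ℤ) * ((τ : ℤ) + 0) ^ 2 = ((α * τ * (i : ℕ) + c * τ ^ 2 : ℕ) : ℤ) := by
            push_cast; ring
          rw [this, zpow_natCast, pow_add, pow_mul]
        rw [Finset.sum_congr rfl fun i _ => Finset.sum_congr rfl fun j _ => hsimp i j]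
        have hv1 : ζ ^ (α * τ) ≠ 1 := fun h => hnd ((hζ.pow_eq_one_iff_dvd _).mp h)
        have hvP : (ζ ^ (α * τ)) ^ P = 1 := by
          rw [← pow_mul]
          exact (hζ.pow_eq_one_iff_dvd _).mpr hpd
        have hinner : ∀ i : Fin P,
            ∑ _j : Fin J, (ζ ^ (α * τ)) ^ (i : ℕ) * ζ ^ (c * τ ^ 2)
              = ((J : ℕ) : ℂ) * ((ζ ^ (α * τ)) ^ (i : ℕ) * ζ ^ (c * τ ^ 2)) := by
          intro i
          rw [Finset.sum_const, Finset.card_univ, Fintype.card_fin, nsmul_eq_mul]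
        rw [Finset.sum_congr rfl fun i _ => hinner i, ← Finset.mul_sum, ← Finset.sum_mul,
          geom_sum_zero' hv1 hvP, zero_mul, mul_zero]
      · have hw1 : ζ ^ (α * Sv) ≠ 1 := fun h => hdvd ((hζ.pow_eq_one_iff_dvd _).mp h)
        have hwJ : (ζ ^ (α * Sv)) ^ J = 1 := by
          rw [← pow_mul]
          refine (hζ.pow_eq_one_iff_dvd _).mpr ?_
          have heq : α * Sv * J = α * J * Sv := by ring
          rw [heq]
          exact H1.mul_right Sv
        have : ∀ i : Fin P, ∑ j : Fin J, (ζ ^ (α * Sv)) ^ (j : ℕ) *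
            ζ ^ ((α : ℤ) * (i : ℕ) * ((τ : ℤ) + ((((i : ℕ) + σ) / P : ℕ) : ℤ))
              + (α : ℤ) * ((σ : ℤ) - (P : ℤ) * ((((i : ℕ) + σ) / P : ℕ) : ℤ))
                  * ((τ : ℤ) + ((((i : ℕ) + σ) / P : ℕ) : ℤ))
              + (c : ℤ) * ((τ : ℤ) + ((((i : ℕ) + σ) / P : ℕ) : ℤ)) ^ 2) = 0 := by
          intro i
          rw [← Finset.sum_mul, geom_sum_zero' hw1 hwJ, zero_mul]
        rw [Finset.sum_congr rfl fun i _ => this i, Finset.sum_const_zero]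
  -- assemble the matrix
  refine ⟨Matrix.of fun i k : Fin (P * J) =>
      a (((i : ℕ) : ZMod (P * J)) - ((k : ℕ) : ZMod (P * J))), ⟨a, fun i j => rfl⟩, ?_, ?_⟩
  · intro i j
    rw [hadef]
    simp only [Matrix.of_apply]
    rw [← pow_mul, mul_comm, pow_mul, hζ.pow_eq_one, one_pow]
  · ext i k
    rw [Matrix.mul_apply]
    simp only [Matrix.conjTranspose_apply, Matrix.of_apply, Matrix.smul_apply, Matrix.one_apply,
      smul_eq_mul]
    have hcast_inj : ∀ i₁ i₂ : Fin (P * J),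
        ((i₁ : ℕ) : ZMod (P * J)) = ((i₂ : ℕ) : ZMod (P * J)) → i₁ = i₂ := by
      intro i₁ i₂ h
      have h2 := congrArg ZMod.val h
      rw [ZMod.val_cast_of_lt i₁.isLt, ZMod.val_cast_of_lt i₂.isLt] at h2
      exact Fin.ext h2
    have hbij : Function.Bijective
        (fun j : Fin (P * J) => ((k : ℕ) : ZMod (P * J)) - ((j : ℕ) : ZMod (P * J))) := by
      have h1 : Function.Bijective (fun j : Fin (P * J) => ((j : ℕ) : ZMod (P * J))) := by
        rw [Fintype.bijective_iff_injective_and_card]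
        exact ⟨fun j₁ j₂ h => hcast_inj _ _ h, by simp [ZMod.card]⟩
      exact (Equiv.subLeft ((k : ℕ) : ZMod (P * J))).bijective.comp h1
    have hsum := Fintype.sum_bijective _ hbij
      (fun j : Fin (P * J) => a (((i : ℕ) : ZMod (P * J)) - ((j : ℕ) : ZMod (P * J))) *
        star (a (((k : ℕ) : ZMod (P * J)) - ((j : ℕ) : ZMod (P * J)))))
      (fun x : ZMod (P * J) =>
        a ((((i : ℕ) : ZMod (P * J)) - ((k : ℕ) : ZMod (P * J))) + x) * star (a x))
      (fun j => by simp only [sub_add_sub_cancel])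
    rw [hsum, main]
    by_cases hik : i = k
    · subst hik
      rw [sub_self, if_pos rfl, if_pos rfl, mul_one]
    · have hne0 : ((i : ℕ) : ZMod (P * J)) - ((k : ℕ) : ZMod (P * J)) ≠ 0 := by
        intro h
        exact hik (hcast_inj _ _ (by rwa [sub_eq_zero] at h))
      rw [if_neg hne0, if_neg hik, mul_zero]


/-- For `m ≤ n` with `(m, n, p) ≠ (0, 1, 2)`, there exists a circulant
`p^n`-Butson Hadamard matrix of dimension `p^(m+n)`. -/
theorem circulant_butson_construction (p n m : ℕ) (hp : p.Prime)
    (hmn : m ≤ n) (hexc : ¬(m = 0 ∧ n = 1 ∧ p = 2)) :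
    ∃ H : Matrix (Fin (p ^ (m + n))) (Fin (p ^ (m + n))) ℂ,
      IsCirculant H ∧ IsButsonHadamard (p ^ n) (p ^ (m + n)) H := by
  have hppos : 0 < p := hp.pos
  by_cases hB : p = 2 ∧ m = 0 ∧ n ≠ 0
  · -- case B : p = 2, m = 0, n ≥ 2
    obtain ⟨hp2, hm0, hn0⟩ := hB
    subst hp2 hm0
    have hn1 : n ≠ 1 := fun h => hexc ⟨rfl, h, rfl⟩
    obtain ⟨k, rfl⟩ : ∃ k, n = k + 2 := ⟨n - 2, by omega⟩
    have heq : 2 ^ (0 + (k + 2)) = 2 * 2 ^ (k + 1) := by ring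
    rw [heq]
    refine key_construction (2 ^ (k + 2)) 2 (2 ^ (k + 1)) 2 2 (by positivity) (by norm_num)
      (by positivity) ⟨1, by ring⟩ ⟨2, by ring⟩ ⟨2 ^ (k + 1), by ring⟩ (by simp) ?_
    intro S hS0 hSlt hdvdS
    obtain ⟨t, ht⟩ := hdvdS
    have ht2 : t < 2 := by
      by_contra h
      have h2 : 2 ^ (k + 2) * 2 ≤ 2 ^ (k + 2) * t := Nat.mul_le_mul_left _ (by omega)
      have h3 : 2 * S < 2 ^ (k + 2) * 2 := by
        have : 2 * 2 ^ (k + 1) = 2 ^ (k + 2) := by ring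
        omega
      omega
    have ht1 : t = 1 := by
      interval_cases t
      · omega
      · rfl
    subst ht1
    have hSval : S = 2 ^ (k + 1) := by
      have : 2 * S = 2 * 2 ^ (k + 1) := by rw [ht]; ring
      omega
    subst hSval
    have hSdiv : 2 ^ (k + 1) / 2 = 2 ^ k := by
      have : 2 ^ (k + 1) = 2 * 2 ^ k := by ring
      rw [this, Nat.mul_div_cancel_left _ (by norm_num)]
    refine ⟨⟨2 ^ k, by ring⟩, ?_, ?_, ?_⟩
    · rw [hSdiv]; exact ⟨1, by ring⟩
    · rw [hSdiv]
      intro hdvd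
      have hle : 2 ^ (k + 2) ≤ 2 * 2 ^ k := Nat.le_of_dvd (by positivity) hdvd
      have : (2 : ℕ) * 2 ^ k < 2 ^ (k + 2) := by
        have h4 : (2 : ℕ) ^ (k + 2) = 4 * 2 ^ k := by ring
        have h5 : (0 : ℕ) < 2 ^ k := by positivity
        omega
      omega
    · rw [hSdiv]; exact ⟨1, by ring⟩
  · -- case A
    have heven : 2 ∣ p ^ (m + n) + p ^ m := by
      by_cases hp2 : p = 2
      · subst hp2
        rcases Nat.eq_zero_or_pos m with hm | hm
        · subst hm
          have hn : n = 0 := by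
            by_contra h
            exact hB ⟨rfl, rfl, h⟩
          subst hn
          norm_num
        · obtain ⟨l, rfl⟩ : ∃ l, m = l + 1 := ⟨m - 1, by omega⟩
          exact Dvd.dvd.add ⟨2 ^ (l + n), by ring⟩ ⟨2 ^ l, by ring⟩
      · have hodd : Odd p := hp.odd_of_ne_two hp2
        exact (hodd.pow.add_odd hodd.pow).two_dvd
    set c : ℕ := (p ^ (m + n) + p ^ m) / 2 with hcdef
    have h2c : 2 * c = p ^ (m + n) + p ^ m := Nat.mul_div_cancel' heven
    have heq : p ^ (m + n) = p ^ m * p ^ n := pow_add p m n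
    rw [heq]
    refine key_construction (p ^ n) (p ^ m) (p ^ n) 1 c (by positivity) (by positivity)
      (by positivity) (by simp) (dvd_mul_left _ _)
      (Dvd.dvd.mul_left ⟨p ^ n, by ring⟩ c) ?_ ?_
    · -- H4
      have h2cZ : (2 : ℤ) * c = (p : ℤ) ^ (m + n) + (p : ℤ) ^ m := by exact_mod_cast h2c
      refine ⟨(p : ℤ) ^ m, ?_⟩
      push_cast
      have : ((p : ℤ)) ^ (m + n) = (p : ℤ) ^ n * (p : ℤ) ^ m := by rw [pow_add]; ring
      linarith
    · -- Hres
      intro S hS0 hSlt hdvdS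
      have hqS : p ^ n ∣ S := by simpa using hdvdS
      have hPS : p ^ m ∣ S := (pow_dvd_pow p hmn).trans hqS
      have hτ : p ^ m * (S / p ^ m) = S := Nat.mul_div_cancel' hPS
      refine ⟨hPS, ?_, ?_, ?_⟩
      · have hcalc : 2 * c * (S / p ^ m) = p ^ (m + n) * (S / p ^ m) + S := by
          rw [h2c, add_mul, hτ]
        rw [hcalc]
        exact dvd_add (Dvd.dvd.mul_right ⟨p ^ m, by rw [pow_add]; ring⟩ _) hqS
      · rw [one_mul]
        intro hdvd
        obtain ⟨t, ht⟩ := hdvd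
        have hSeq : S = p ^ (m + n) * t := by
          rw [← hτ, ht, pow_add]; ring
        have ht0 : t ≠ 0 := by
          intro h
          rw [h, mul_zero] at hSeq
          omega
        have : p ^ (m + n) ≤ S := by
          rw [hSeq]
          exact Nat.le_mul_of_pos_right _ (Nat.pos_of_ne_zero ht0)
        rw [heq] at this
        omega
      · rw [one_mul]
        have : S / p ^ m * p ^ m = S := by rw [mul_comm]; exact hτ
        rw [this]
        exact hqS
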